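/- Let V be a finite-dimensional real vector space, K ⊆ V a closed convex polyhedral cone, F a closed face of K, and μ ∈ V^∨. If F meets both open half-spaces {x : μ(x) > 0} and {x : μ(x) < 0}, then span(F) + K = span(F) + (K ∩ ker μ), and moreover span(F ∩ ker μ) + K = span(F) + K. -/

import Mathlib

open scoped Pointwise

/-- A closed convex polyhedral cone: the set of nonnegative combinations of
finitely many vectors. -/
def IsPolyCone {V : Type*} [AddCommGroup V] [Module ℝ V] (K : Set V) : Prop :=
  ∃ (n : ℕ) (v : Fin n → V),
    K = {x | ∃ c : Fin n → ℝ, (∀ i, 0 ≤ c i) ∧ x = ∑ i, c i • v i}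

/-- A closed face of a cone `K`: the intersection of `K` with the kernel of a
linear functional that is nonnegative on `K`. -/
def IsFaceOfCone {V : Type*} [AddCommGroup V] [Module ℝ V] (K F : Set V) : Prop :=
  ∃ ℓ : V →ₗ[ℝ] ℝ, (∀ x ∈ K, 0 ≤ ℓ x) ∧ F = {x ∈ K | ℓ x = 0}

theorem polyCone_add {V : Type*} [AddCommGroup V] [Module ℝ V] {K : Set V}
    (hK : IsPolyCone K) : ∀ a ∈ K, ∀ b ∈ K, a + b ∈ K := by
  obtain ⟨n, v, rfl⟩ := hK
  rintro a ⟨c, hc, rfl⟩ b ⟨d, hd, rfl⟩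
  exact ⟨c + d, fun i => add_nonneg (hc i) (hd i), by
    simp [add_smul, Finset.sum_add_distrib]⟩

theorem polyCone_smul {V : Type*} [AddCommGroup V] [Module ℝ V] {K : Set V}
    (hK : IsPolyCone K) : ∀ t : ℝ, 0 ≤ t → ∀ a ∈ K, t • a ∈ K := by
  obtain ⟨n, v, rfl⟩ := hK
  rintro t ht a ⟨c, hc, rfl⟩
  exact ⟨fun i => t * c i, fun i => mul_nonneg ht (hc i), by
    simp [Finset.smul_sum, mul_smul]⟩

/-- if a closed face `F` of a closed convex polyhedral cone `K`
meets both open half-spaces `{μ > 0}` and `{μ < 0}`, then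
`span F + K = span F + (K ∩ ker μ)` and `span (F ∩ ker μ) + K = span F + K`. -/
theorem stmt_2 {V : Type*} [AddCommGroup V] [Module ℝ V] [FiniteDimensional ℝ V]
    (K F : Set V) (hK : IsPolyCone K) (hF : IsFaceOfCone K F)
    (μ : V →ₗ[ℝ] ℝ)
    (hpos : ∃ x ∈ F, 0 < μ x) (hneg : ∃ y ∈ F, μ y < 0) :
    (Submodule.span ℝ F : Set V) + K
        = (Submodule.span ℝ F : Set V) + (K ∩ {x | μ x = 0}) ∧
      (Submodule.span ℝ (F ∩ {x | μ x = 0}) : Set V) + K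
        = (Submodule.span ℝ F : Set V) + K := by
  obtain ⟨ℓ, hℓ, hFdef⟩ := hF
  obtain ⟨x, hxF, hxpos⟩ := hpos
  obtain ⟨y, hyF, hyneg⟩ := hneg
  have hFK : F ⊆ K := by rw [hFdef]; exact fun z hz => hz.1
  have hxne : μ x ≠ 0 := ne_of_gt hxpos
  have hyne : μ y ≠ 0 := ne_of_lt hyneg
  -- F is closed under addition and nonneg scalars
  have hFadd : ∀ a ∈ F, ∀ b ∈ F, a + b ∈ F := by
    rw [hFdef]
    rintro a ⟨haK, ha0⟩ b ⟨hbK, hb0⟩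
    exact ⟨polyCone_add hK a haK b hbK, by simp [ha0, hb0]⟩
  have hFsmul : ∀ t : ℝ, 0 ≤ t → ∀ a ∈ F, t • a ∈ F := by
    rw [hFdef]
    rintro t ht a ⟨haK, ha0⟩
    exact ⟨polyCone_smul hK t ht a haK, by simp [ha0]⟩
  -- Part 1
  have part1 : (Submodule.span ℝ F : Set V) + K
      = (Submodule.span ℝ F : Set V) + (K ∩ {x | μ x = 0}) := by
    apply Set.Subset.antisymm
    · intro u hu
      rw [Set.mem_add] at hu
      obtain ⟨s, hs, k, hk, rfl⟩ := hu
      rcases lt_trichotomy (μ k) 0 with h | h | h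
      · -- adjust with x (μ x > 0): t = -μk/μx > 0
        set t : ℝ := -μ k / μ x with htdef
        have ht : 0 ≤ t := div_nonneg (by linarith) hxpos.le
        refine Set.mem_add.2 ⟨s - t • x, ?_, k + t • x, ⟨?_, ?_⟩, by abel⟩
        · exact sub_mem hs (Submodule.smul_mem _ _ (Submodule.subset_span hxF))
        · exact polyCone_add hK k hk _ (polyCone_smul hK t ht x (hFK hxF))
        · show μ (k + t • x) = 0
          simp only [map_add, map_smul, smul_eq_mul, htdef, neg_div, div_neg]
          field_simp
          ring
      · exact Set.mem_add.2 ⟨s, hs, k, ⟨hk, h⟩, rfl⟩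
      · -- adjust with y (μ y < 0): t = μk/(-μy) > 0
        set t : ℝ := μ k / (-μ y) with htdef
        have ht : 0 ≤ t := by
          apply div_nonneg h.le; linarith
        refine Set.mem_add.2 ⟨s - t • y, ?_, k + t • y, ⟨?_, ?_⟩, by abel⟩
        · exact sub_mem hs (Submodule.smul_mem _ _ (Submodule.subset_span hyF))
        · exact polyCone_add hK k hk _ (polyCone_smul hK t ht y (hFK hyF))
        · show μ (k + t • y) = 0
          simp only [map_add, map_smul, smul_eq_mul, htdef, neg_div, div_neg]
          field_simp
          ring
    · intro u hu
      rw [Set.mem_add] at hu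
      obtain ⟨s, hs, k, hk, rfl⟩ := hu
      exact Set.mem_add.2 ⟨s, hs, k, hk.1, rfl⟩
  refine ⟨part1, ?_⟩
  -- Part 2
  set W : Submodule ℝ V := Submodule.span ℝ (F ∩ {x | μ x = 0}) with hWdef
  -- the auxiliary element w = y + s0 • x ∈ F ∩ ker μ, with s0 > 0
  set s0 : ℝ := -μ y / μ x with hs0def
  have hs0pos : 0 < s0 := by
    apply div_pos; linarith; exact hxpos
  set w : V := y + s0 • x with hwdef
  have hwF : w ∈ F := hFadd y hyF _ (hFsmul s0 hs0pos.le x hxF)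
  have hwμ : μ w = 0 := by
    simp only [hwdef, map_add, map_smul, smul_eq_mul, hs0def]
    field_simp
    ring
  have hwW : w ∈ W := Submodule.subset_span ⟨hwF, hwμ⟩
  -- span F ≤ W ⊔ ℝ ∙ x
  have hspanF : Submodule.span ℝ F ≤ W ⊔ ℝ ∙ x := by
    rw [Submodule.span_le]
    intro f hf
    rcases le_or_gt 0 (μ f) with h | h
    · -- z = f + t • y ∈ F ∩ ker μ with t = μf/(-μy) ≥ 0
      set t : ℝ := μ f / (-μ y) with htdef
      have ht : 0 ≤ t := by apply div_nonneg h; linarith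
      set z : V := f + t • y with hzdef
      have hzF : z ∈ F := hFadd f hf _ (hFsmul t ht y hyF)
      have hzμ : μ z = 0 := by
        simp only [hzdef, map_add, map_smul, smul_eq_mul, htdef, neg_div, div_neg]
        field_simp
        ring
      have hzW : z ∈ W := Submodule.subset_span ⟨hzF, hzμ⟩
      -- f = (z - t • w) + (t * s0) • x
      refine Submodule.mem_sup.2 ⟨z - t • w, sub_mem hzW (Submodule.smul_mem _ _ hwW),
        (t * s0) • x, Submodule.mem_span_singleton.2 ⟨t * s0, rfl⟩, ?_⟩
      rw [hzdef, hwdef]; module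
    · -- z = f + t • x ∈ F ∩ ker μ with t = -μf/μx > 0
      set t : ℝ := -μ f / μ x with htdef
      have ht : 0 ≤ t := div_nonneg (by linarith) hxpos.le
      set z : V := f + t • x with hzdef
      have hzF : z ∈ F := hFadd f hf _ (hFsmul t ht x hxF)
      have hzμ : μ z = 0 := by
        simp only [hzdef, map_add, map_smul, smul_eq_mul, htdef, neg_div, div_neg]
        field_simp
        ring
      have hzW : z ∈ W := Submodule.subset_span ⟨hzF, hzμ⟩
      refine Submodule.mem_sup.2 ⟨z, hzW,
        (-t) • x, Submodule.mem_span_singleton.2 ⟨-t, rfl⟩, ?_⟩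
      rw [hzdef]; module
  apply Set.Subset.antisymm
  · exact Set.add_subset_add
      (fun v hv => Submodule.span_mono Set.inter_subset_left hv) subset_rfl
  · intro u hu
    rw [Set.mem_add] at hu
    obtain ⟨s, hs, k, hk, rfl⟩ := hu
    obtain ⟨a, haW, b, hb, hab⟩ := Submodule.mem_sup.1 (hspanF hs)
    obtain ⟨c, rfl⟩ := Submodule.mem_span_singleton.1 hb
    rcases le_or_gt 0 c with hc | hc
    · refine Set.mem_add.2 ⟨a, haW, c • x + k, polyCone_add hK _
        (polyCone_smul hK c hc x (hFK hxF)) k hk, ?_⟩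
      rw [← hab]; abel
    · -- c • x = (c / s0) • w + (-(c / s0)) • y
      refine Set.mem_add.2 ⟨a + (c / s0) • w,
        add_mem haW (Submodule.smul_mem _ _ hwW),
        ((-c) / s0) • y + k, polyCone_add hK _
          (polyCone_smul hK _ (div_nonneg (by linarith) hs0pos.le) y (hFK hyF)) k hk, ?_⟩
      rw [← hab, hwdef]
      have hs0ne : s0 ≠ 0 := ne_of_gt hs0pos
      match_scalars <;> field_simp <;> ring
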